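/- Let k ≥ 0 be an integer, U ⊆ ℂ an open set, and f holomorphic on U. Then there exist continuous functions φ₀, φ₁, …, φ_k : U → ℂ, not depending on m, such that for every integer m and every z ∈ U with f(z) ≠ 0, (H_k^m f)(z) = f(z)^{m−k} · ∑_{j=0}^{k} φ_j(z)·mʲ (where f(z)^{m−k} denotes the integer power, possibly negative). -/

import Mathlib

/-- `Hop k g` is the result of applying the operator `g ↦ (z ↦ z·g′(z))` `k` times to `g`. -/
noncomputable def Hop (k : ℕ) (g : ℂ → ℂ) : ℂ → ℂ :=
  (fun h : ℂ → ℂ => fun z => z * deriv h z)^[k] g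

lemma Hop_succ (k : ℕ) (g : ℂ → ℂ) (z : ℂ) :
    Hop (k + 1) g z = z * deriv (Hop k g) z := by
  simp [Hop, Function.iterate_succ_apply']

lemma deriv_zero_fun : deriv (0 : ℂ → ℂ) = 0 := by
  simp [Pi.zero_def, deriv_const']

lemma Hop_aux (k : ℕ) (U : Set ℂ) (hU : IsOpen U) (f : ℂ → ℂ)
    (hf : DifferentiableOn ℂ f U) :
    ∃ φ : ℕ → ℂ → ℂ, (∀ j, DifferentiableOn ℂ (φ j) U) ∧ (∀ j, k < j → φ j = 0) ∧
      ∀ m : ℤ, ∀ z ∈ U, f z ≠ 0 →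
        Hop k (fun w => f w ^ m) z
          = f z ^ (m - k) * ∑ j ∈ Finset.range (k + 1), φ j z * (m : ℂ) ^ j := by
  induction k with
  | zero =>
    refine ⟨fun j _ => if j = 0 then 1 else 0, fun j => differentiableOn_const _, ?_, ?_⟩
    · intro j hj
      have : j ≠ 0 := by omega
      funext w
      simp [this]
    · intro m z hz hfz
      simp [Hop]
  | succ k ih =>
    obtain ⟨φ, hd, h0, hfor⟩ := ih
    have hfa : AnalyticOnNhd ℂ f U := hf.analyticOnNhd hU
    have hdf : DifferentiableOn ℂ (deriv f) U := hfa.deriv.differentiableOn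
    have hdφ : ∀ j, DifferentiableOn ℂ (deriv (φ j)) U := fun j =>
      (((hd j).analyticOnNhd hU).deriv).differentiableOn
    set φp : ℕ → ℂ → ℂ := fun n => if n = 0 then 0 else φ (n - 1) with hφp
    have hdφp : ∀ n, DifferentiableOn ℂ (φp n) U := by
      intro n
      by_cases hn : n = 0 <;> simp [hφp, hn]
      · exact hd _
    set ψ : ℕ → ℂ → ℂ := fun n z =>
      z * deriv f z * (φp n z - (k : ℂ) * φ n z) + z * f z * deriv (φ n) z with hψ
    refine ⟨ψ, ?_, ?_, ?_⟩
    · intro n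
      exact ((differentiableOn_id.mul hdf).mul ((hdφp n).sub
        ((differentiableOn_const _).mul (hd n)))).add
        ((differentiableOn_id.mul hf).mul (hdφ n))
    · intro j hj
      have h1 : φ (j - 1) = 0 := h0 _ (by omega)
      have h2 : φ j = 0 := h0 _ (by omega)
      have hj0 : j ≠ 0 := by omega
      funext w
      simp [hψ, hφp, hj0, h1, h2, deriv_zero_fun]
    · intro m z hz hfz
      set V : Set ℂ := U ∩ f ⁻¹' {0}ᶜ with hV
      have hVopen : IsOpen V := hf.continuousOn.isOpen_inter_preimage hU isOpen_compl_singleton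
      have hVz : V ∈ nhds z := hVopen.mem_nhds ⟨hz, hfz⟩
      set S : ℂ := ∑ j ∈ Finset.range (k + 1), φ j z * (m : ℂ) ^ j with hS
      set S' : ℂ := ∑ j ∈ Finset.range (k + 1), deriv (φ j) z * (m : ℂ) ^ j with hS'
      have heq : deriv (Hop k fun w => f w ^ m) z
          = deriv (fun w => f w ^ (m - k) * ∑ j ∈ Finset.range (k + 1), φ j w * (m : ℂ) ^ j) z := by
        refine Filter.EventuallyEq.deriv_eq ?_
        filter_upwards [hVz] with w hw
        exact hfor m w hw.1 hw.2
      have hfd : HasDerivAt f (deriv f z) z := (hf.differentiableAt (hU.mem_nhds hz)).hasDerivAt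
      have h1 : HasDerivAt (fun w => f w ^ (m - (k : ℤ)))
          (((m - (k : ℤ) : ℤ) : ℂ) * f z ^ (m - (k : ℤ) - 1) * deriv f z) z := by
        have := (hasDerivAt_zpow (m - (k : ℤ)) (f z) (Or.inl hfz)).comp z hfd
        simpa [Function.comp_def, mul_assoc] using this
      have h2 : HasDerivAt (fun w => ∑ j ∈ Finset.range (k + 1), φ j w * (m : ℂ) ^ j) S' z := by
        rw [hS']
        exact HasDerivAt.fun_sum fun j _ =>
          (((hd j).differentiableAt (hU.mem_nhds hz)).hasDerivAt).mul_const _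
      have hder : deriv (fun w => f w ^ (m - k) * ∑ j ∈ Finset.range (k + 1), φ j w * (m : ℂ) ^ j) z
          = ((m : ℂ) - (k : ℂ)) * f z ^ (m - (k : ℤ) - 1) * deriv f z * S
            + f z ^ (m - (k : ℤ)) * S' := by
        have := (h1.fun_mul h2).deriv
        rw [this]
        push_cast
        ring
      -- sum identities
      have e1 : ∑ n ∈ Finset.range (k + 2), φp n z * (m : ℂ) ^ n = (m : ℂ) * S := by
        rw [Finset.sum_range_succ']
        have t0 : φp 0 z * (m : ℂ) ^ 0 = 0 := by simp [hφp]
        rw [t0, add_zero, hS, Finset.mul_sum]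
        refine Finset.sum_congr rfl fun j _ => ?_
        have tj : φp (j + 1) = φ j := by simp [hφp]
        rw [tj, pow_succ]
        ring
      have e2 : ∑ n ∈ Finset.range (k + 2), φ n z * (m : ℂ) ^ n = S := by
        rw [Finset.sum_range_succ, hS]
        simp [h0 (k + 1) (by omega)]
      have e3 : ∑ n ∈ Finset.range (k + 2), deriv (φ n) z * (m : ℂ) ^ n = S' := by
        rw [Finset.sum_range_succ, hS', h0 (k + 1) (by omega), deriv_zero_fun]
        simp
      have hsum : ∑ n ∈ Finset.range (k + 2), ψ n z * (m : ℂ) ^ n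
          = z * deriv f z * (((m : ℂ) - (k : ℂ)) * S) + z * f z * S' := by
        have hterm : ∀ n, ψ n z * (m : ℂ) ^ n
            = z * deriv f z * (φp n z * (m : ℂ) ^ n)
              - (k : ℂ) * (z * deriv f z * (φ n z * (m : ℂ) ^ n))
              + z * f z * (deriv (φ n) z * (m : ℂ) ^ n) := fun n => by
          simp only [hψ]; ring
        rw [Finset.sum_congr rfl fun n _ => hterm n, Finset.sum_add_distrib,
          Finset.sum_sub_distrib, ← Finset.mul_sum, ← Finset.mul_sum, ← Finset.mul_sum,
          ← Finset.mul_sum, e1, e2, e3]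
        ring
      have hz1 : f z ^ (m - ((k : ℕ) + 1 : ℕ)) = f z ^ (m - (k : ℤ) - 1) := by
        congr 1
        push_cast
        ring
      have hz2 : f z ^ (m - (k : ℤ)) = f z ^ (m - (k : ℤ) - 1) * f z := by
        rw [← zpow_add_one₀ hfz]
        ring_nf
      rw [Hop_succ, heq, hder, hz1, hsum, hz2]
      ring

theorem stmt13 (k : ℕ) (U : Set ℂ) (hU : IsOpen U) (f : ℂ → ℂ)
    (hf : DifferentiableOn ℂ f U) :
    ∃ φ : Fin (k + 1) → ℂ → ℂ, (∀ j, ContinuousOn (φ j) U) ∧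
      ∀ m : ℤ, ∀ z ∈ U, f z ≠ 0 →
        Hop k (fun w => f w ^ m) z
          = f z ^ (m - k) * ∑ j : Fin (k + 1), φ j z * (m : ℂ) ^ (j : ℕ) := by
  obtain ⟨φ, hd, _, hfor⟩ := Hop_aux k U hU f hf
  refine ⟨fun j => φ j, fun j => (hd j).continuousOn, fun m z hz hfz => ?_⟩
  rw [hfor m z hz hfz]
  congr 1
  exact (Fin.sum_univ_eq_sum_range (fun j => φ j z * (m : ℂ) ^ j) (k + 1)).symm
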